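/- If ρ_a < ρ and ρ_a < 1/(|s|·a_1), then A is unbounded on the interval (0, ρ_a): for every real M there exists x with 0 < x < ρ_a and A(x) > M. -/

import Mathlib

open scoped BigOperators ENNReal NNReal
open Finset

set_option maxHeartbeats 1000000

/-- The radius of convergence of the power series with real coefficients `c`. -/
noncomputable def seriesRadius (c : ℕ → ℝ) : ℝ≥0∞ :=
  ⨆ (r : ℝ≥0) (_ : Summable fun n => |c n| * (r : ℝ) ^ n), (r : ℝ≥0∞)


private lemma fac_le_aux (n k : ℕ) : ∀ j, k ≤ j → 2*j ≤ n →
    Nat.factorial j * Nat.factorial (n-j) ≤ Nat.factorial k * Nat.factorial (n-k) := by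
  intro j
  induction j with
  | zero => intro hk _; interval_cases k; simp
  | succ j ih =>
    intro hk hj
    rcases Nat.lt_or_ge k (j+1) with hk' | hk'
    · -- k ≤ j
      have hk2 : k ≤ j := by omega
      have h1 : Nat.factorial (j+1) * Nat.factorial (n-(j+1)) ≤
          Nat.factorial j * Nat.factorial (n-j) := by
        have hnj : n - j = (n - (j+1)) + 1 := by omega
        rw [Nat.factorial_succ, hnj, Nat.factorial_succ]
        have : (j+1) ≤ (n - (j+1)) + 1 := by omega
        calc (j+1) * Nat.factorial j * Nat.factorial (n-(j+1))
            = (j+1) * (Nat.factorial j * Nat.factorial (n-(j+1))) := by ring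
          _ ≤ ((n-(j+1))+1) * (Nat.factorial j * Nat.factorial (n-(j+1))) := by
              exact Nat.mul_le_mul_right _ this
          _ = Nat.factorial j * (((n-(j+1))+1) * Nat.factorial (n-(j+1))) := by ring
      exact le_trans h1 (ih hk2 (by omega))
    · have : k = j+1 := by omega
      subst this; exact le_refl _

private lemma fac_sym (n k j : ℕ) (hk1 : k ≤ j) (hk2 : k ≤ n - j) (hjn : j ≤ n) :
    Nat.factorial j * Nat.factorial (n-j) ≤ Nat.factorial k * Nat.factorial (n-k) := by
  rcases le_or_gt (2*j) n with h | h
  · exact fac_le_aux n k j hk1 h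
  · have h2 : 2*(n-j) ≤ n := by omega
    have hk3 : k ≤ n - j := hk2
    have := fac_le_aux n k (n-j) hk3 h2
    have hnn : n - (n-j) = j := by omega
    rw [hnn] at this
    calc Nat.factorial j * Nat.factorial (n-j)
        = Nat.factorial (n-j) * Nat.factorial j := Nat.mul_comm _ _
      _ ≤ _ := this

private lemma pow_one_add_le (δ : ℝ) (hδ : 0 ≤ δ) :
    ∀ n : ℕ, (n:ℝ)*δ ≤ 1/2 → (1+δ)^n ≤ 1 + 2*n*δ := by
  intro n
  induction n with
  | zero => intro _; norm_num
  | succ n ih =>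
    intro h
    have hn : (n:ℝ)*δ ≤ 1/2 := by
      push_cast at h
      nlinarith
    have h1 := ih hn
    have hpos : (0:ℝ) ≤ (1+δ)^n := by positivity
    have : (1+δ)^(n+1) = (1+δ)^n * (1+δ) := by ring
    rw [this]
    have h2 : (1+δ)^n * (1+δ) ≤ (1 + 2*n*δ) * (1+δ) := by nlinarith
    push_cast
    nlinarith [hn, hδ]

private lemma sum_sq_bound (c : ℕ → ℝ) (hc : ∀ n, 0 ≤ c n) (N : ℕ) :
    ∑ n ∈ Finset.Ico 1 (N+1), ∑ j ∈ Finset.Ico 1 n, c j * c (n-j)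
      ≤ (∑ k ∈ Finset.range N, c k)^2 := by
  classical
  have hrhs : (∑ k ∈ Finset.range N, c k)^2
      = ∑ p ∈ Finset.range N ×ˢ Finset.range N, c p.1 * c p.2 := by
    rw [sq, Finset.sum_mul_sum, Finset.sum_product]
  rw [hrhs, Finset.sum_sigma' (Finset.Ico 1 (N+1)) (fun n => Finset.Ico 1 n)
    (fun n j => c j * c (n-j))]
  set S := (Finset.Ico 1 (N+1)).sigma (fun n => Finset.Ico 1 n) with hS
  have hinj : ∀ x ∈ S, ∀ y ∈ S,
      (fun x : (_ : ℕ) × ℕ => (x.2, x.1 - x.2)) x = (fun x : (_ : ℕ) × ℕ => (x.2, x.1 - x.2)) y → x = y := by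
    rintro ⟨n₁, j₁⟩ hx ⟨n₂, j₂⟩ hy h
    rw [hS] at hx hy
    simp only [Finset.mem_sigma, Finset.mem_Ico] at hx hy
    simp only [Prod.mk.injEq] at h
    obtain ⟨h1, h2⟩ := h
    have : n₁ = n₂ := by omega
    subst this; subst h1; rfl
  have himg : Finset.image (fun x : (_ : ℕ) × ℕ => (x.2, x.1 - x.2)) S
      ⊆ Finset.range N ×ˢ Finset.range N := by
    intro p hp
    simp only [Finset.mem_image] at hp
    obtain ⟨⟨n, j⟩, hx, rfl⟩ := hp
    rw [hS] at hx
    simp only [Finset.mem_sigma, Finset.mem_Ico] at hx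
    simp only [Finset.mem_product, Finset.mem_range]
    omega
  calc ∑ x ∈ S, c x.2 * c (x.1 - x.2)
      = ∑ p ∈ Finset.image (fun x : (_ : ℕ) × ℕ => (x.2, x.1 - x.2)) S, c p.1 * c p.2 := by
        rw [Finset.sum_image hinj]
    _ ≤ ∑ p ∈ Finset.range N ×ˢ Finset.range N, c p.1 * c p.2 := by
        apply Finset.sum_le_sum_of_subset_of_nonneg himg
        intro p _ _
        exact mul_nonneg (hc _) (hc _)

private lemma w_nonneg (si σ : ℝ) (hsi : 1 ≤ si) (hσ1 : σ ≤ 1) (n j : ℕ) (hj : 1 ≤ j) :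
    0 ≤ (si*j - σ) * (Nat.factorial j : ℝ) * (Nat.factorial (n-j) : ℝ) / (Nat.factorial n : ℝ) := by
  have h1 : (1:ℝ) ≤ (j:ℝ) := by exact_mod_cast hj
  have h2 : 0 ≤ si*j - σ := by nlinarith
  positivity

private lemma w_le_si (si σ : ℝ) (hsi : 1 ≤ si) (hσ1 : σ ≤ 1) (hσ2 : -1 ≤ σ)
    (n j : ℕ) (hj : 1 ≤ j) (hjn : j < n) :
    (si*j - σ) * (Nat.factorial j : ℝ) * (Nat.factorial (n-j) : ℝ) / (Nat.factorial n : ℝ) ≤ si := by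
  have hnf : (0:ℝ) < (Nat.factorial n : ℝ) := by positivity
  rw [div_le_iff₀ hnf]
  have hfacN : Nat.factorial j * Nat.factorial (n-j) ≤ Nat.factorial 1 * Nat.factorial (n-1) :=
    fac_sym n 1 j hj (by omega) (by omega)
  have hfacR : (Nat.factorial j : ℝ) * (Nat.factorial (n-j) : ℝ) ≤ (Nat.factorial (n-1) : ℝ) := by
    have h := hfacN
    simp only [Nat.factorial_one, one_mul] at h
    exact_mod_cast h
  have hjr : (1:ℝ) ≤ (j:ℝ) := by exact_mod_cast hj
  have h1 : si*j - σ ≤ si*((j:ℝ)+1) := by nlinarith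
  have h0 : 0 ≤ si*j - σ := by nlinarith
  have hnn : (Nat.factorial n : ℝ) = (n:ℝ) * (Nat.factorial (n-1) : ℝ) := by
    obtain ⟨m, rfl⟩ : ∃ m, n = m + 1 := ⟨n-1, by omega⟩
    simp only [Nat.add_sub_cancel, Nat.factorial_succ]
    push_cast; ring
  have hj1n : (j:ℝ) + 1 ≤ (n:ℝ) := by exact_mod_cast (by omega : j + 1 ≤ n)
  calc (si*j - σ) * (Nat.factorial j : ℝ) * (Nat.factorial (n-j) : ℝ)
      = (si*j - σ) * ((Nat.factorial j : ℝ) * (Nat.factorial (n-j) : ℝ)) := by ring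
    _ ≤ (si*((j:ℝ)+1)) * (Nat.factorial (n-1) : ℝ) :=
        mul_le_mul h1 hfacR (by positivity) (by nlinarith)
    _ ≤ (si*(n:ℝ)) * (Nat.factorial (n-1) : ℝ) := by
        have h2 : si*((j:ℝ)+1) ≤ si*(n:ℝ) := by nlinarith
        exact mul_le_mul_of_nonneg_right h2 (by positivity)
    _ = si * (Nat.factorial n : ℝ) := by rw [hnn]; ring

private lemma w_le_mid (si σ : ℝ) (hsi : 1 ≤ si) (hσ1 : σ ≤ 1) (hσ2 : -1 ≤ σ)
    (n j : ℕ) (hj : 1 ≤ j) (hjn : j + 1 < n) :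
    (si*j - σ) * (Nat.factorial j : ℝ) * (Nat.factorial (n-j) : ℝ) / (Nat.factorial n : ℝ)
      ≤ 2*si/(n:ℝ) := by
  have hnf : (0:ℝ) < (Nat.factorial n : ℝ) := by positivity
  have hnr : (0:ℝ) < (n:ℝ) := by exact_mod_cast (by omega : 0 < n)
  rw [div_le_div_iff₀ hnf hnr]
  have hjr : (1:ℝ) ≤ (j:ℝ) := by exact_mod_cast hj
  have h0 : 0 ≤ si*j - σ := by nlinarith
  have hnn1 : (Nat.factorial n : ℝ) = (n:ℝ) * (Nat.factorial (n-1) : ℝ) := by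
    obtain ⟨m, hm⟩ : ∃ m, n = m + 1 := ⟨n-1, by omega⟩
    subst hm
    simp only [Nat.add_sub_cancel, Nat.factorial_succ]
    push_cast; ring
  rcases eq_or_lt_of_le hj with h | h
  · -- j = 1
    have hj1 : j = 1 := h.symm
    subst hj1
    have h1 : si*(1:ℕ) - σ ≤ 2*si := by push_cast; nlinarith
    calc (si*(1:ℕ) - σ) * (Nat.factorial 1 : ℝ) * (Nat.factorial (n-1) : ℝ) * (n:ℝ)
        = (si*(1:ℕ) - σ) * ((Nat.factorial (n-1) : ℝ) * (n:ℝ)) := by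
          simp [Nat.factorial_one]; ring
      _ ≤ (2*si) * ((Nat.factorial (n-1) : ℝ) * (n:ℝ)) := by
          apply mul_le_mul_of_nonneg_right h1 (by positivity)
      _ = 2*si * (Nat.factorial n : ℝ) := by rw [hnn1]; ring
  · -- 2 ≤ j
    have hfacN : Nat.factorial j * Nat.factorial (n-j) ≤ Nat.factorial 2 * Nat.factorial (n-2) :=
      fac_sym n 2 j (by omega) (by omega) (by omega)
    have hfacR : (Nat.factorial j : ℝ) * (Nat.factorial (n-j) : ℝ)
        ≤ 2 * (Nat.factorial (n-2) : ℝ) := by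
      have h2 : (Nat.factorial 2) = 2 := rfl
      rw [h2] at hfacN
      exact_mod_cast hfacN
    have h1 : si*j - σ ≤ si*((j:ℝ)+1) := by nlinarith
    have hj1n : (j:ℝ) + 1 ≤ (n:ℝ) - 1 := by
      have hc : (j:ℝ) + 2 ≤ (n:ℝ) := by exact_mod_cast (by omega : j + 2 ≤ n)
      linarith
    have hnn : (Nat.factorial n : ℝ) = (n:ℝ) * ((n:ℝ)-1) * (Nat.factorial (n-2) : ℝ) := by
      obtain ⟨m, hm⟩ : ∃ m, n = m + 2 := ⟨n-2, by omega⟩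
      subst hm
      have e2 : m + 2 - 2 = m := by omega
      rw [e2, show m+2 = (m+1)+1 from rfl, Nat.factorial_succ, Nat.factorial_succ]
      push_cast; ring
    calc (si*j - σ) * (Nat.factorial j : ℝ) * (Nat.factorial (n-j) : ℝ) * (n:ℝ)
        = ((si*j - σ) * ((Nat.factorial j : ℝ) * (Nat.factorial (n-j) : ℝ))) * (n:ℝ) := by ring
      _ ≤ ((si*((j:ℝ)+1)) * (2 * (Nat.factorial (n-2) : ℝ))) * (n:ℝ) := by
          apply mul_le_mul_of_nonneg_right _ (le_of_lt hnr)
          exact mul_le_mul h1 hfacR (by positivity) (by nlinarith)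
      _ ≤ ((si*((n:ℝ)-1)) * (2 * (Nat.factorial (n-2) : ℝ))) * (n:ℝ) := by
          have h2 : si*((j:ℝ)+1) ≤ si*((n:ℝ)-1) := by nlinarith
          have h3 : (0:ℝ) ≤ 2 * (Nat.factorial (n-2) : ℝ) := by positivity
          nlinarith [mul_le_mul_of_nonneg_right h2 h3]
      _ = 2*si * (Nat.factorial n : ℝ) := by rw [hnn]; ring

private lemma le_seriesRadius (c : ℕ → ℝ) (r : ℝ≥0)
    (h : Summable fun n => |c n| * (r : ℝ) ^ n) : (r : ℝ≥0∞) ≤ seriesRadius c := by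
  exact le_iSup₂ (f := fun (r : ℝ≥0) (_ : Summable fun n => |c n| * (r : ℝ) ^ n) => (r : ℝ≥0∞)) r h

private lemma exists_of_lt_seriesRadius (c : ℕ → ℝ) (x : ℝ≥0∞) (h : x < seriesRadius c) :
    ∃ r : ℝ≥0, (Summable fun n => |c n| * (r : ℝ) ^ n) ∧ x < (r : ℝ≥0∞) := by
  rw [seriesRadius, lt_iSup_iff] at h
  obtain ⟨r, hr⟩ := h
  rw [lt_iSup_iff] at hr
  obtain ⟨hs, hx⟩ := hr
  exact ⟨r, hs, hx⟩

private lemma summable_of_lt_seriesRadius (c : ℕ → ℝ) (x : ℝ) (hx : 0 ≤ x)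
    (h : ENNReal.ofReal x < seriesRadius c) : Summable fun n => c n * x ^ n := by
  obtain ⟨r, hs, hlt⟩ := exists_of_lt_seriesRadius c _ h
  have hxr : x < (r : ℝ) := by
    have := (ENNReal.ofReal_lt_coe_iff ?_).mp hlt
    · exact_mod_cast this
    · exact hx
  apply Summable.of_norm
  apply Summable.of_nonneg_of_le (fun n => norm_nonneg _) _ hs
  intro n
  rw [Real.norm_eq_abs, abs_mul, abs_pow]
  apply mul_le_mul_of_nonneg_left _ (abs_nonneg _)
  exact pow_le_pow_left₀ (abs_nonneg x) (by rw [abs_of_nonneg hx]; exact le_of_lt hxr) n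

private lemma key_summable (si σ : ℝ) (hsi : 1 ≤ si) (hσ1 : σ ≤ 1) (hσ2 : -1 ≤ σ)
    (q b : ℕ → ℝ) (hq : ∀ n, 0 ≤ q n) (hb : ∀ n, 0 ≤ b n) (hb0 : b 0 = 0)
    (hrec : ∀ n, 1 ≤ n → b n = q n + ∑ j ∈ Finset.Ico 1 n,
      ((si * j - σ) * (Nat.factorial j : ℝ) * (Nat.factorial (n-j) : ℝ) / (Nat.factorial n : ℝ))
        * b j * b (n-j))
    (hbs : Summable b)
    (T : ℝ) (hT : 1 < T) (hqT : Summable fun n => q n * T^n)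
    (hlin : si * b 1 < 1) :
    ∃ t : ℝ, 1 < t ∧ Summable fun n => b n * t ^ n := by
  have hsi0 : 0 < si := by linarith
  obtain ⟨S, hSdef⟩ : ∃ S, S = ∑' n, b n := ⟨_, rfl⟩
  have hS0 : 0 ≤ S := hSdef ▸ tsum_nonneg hb
  obtain ⟨F, hFdef⟩ : ∃ F, F = ∑' n, q n * T^n := ⟨_, rfl⟩
  have hF0 : 0 ≤ F := hFdef ▸ tsum_nonneg (fun n => mul_nonneg (hq n) (by positivity))
  obtain ⟨θ0, hθ0def⟩ : ∃ x, x = si * b 1 := ⟨_, rfl⟩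
  have hθ0lt : θ0 < 1 := hθ0def ▸ hlin
  have hθ00 : 0 ≤ θ0 := hθ0def ▸ mul_nonneg (le_of_lt hsi0) (hb 1)
  obtain ⟨θ, hθdef⟩ : ∃ x, x = (1+θ0)/2 := ⟨_, rfl⟩
  have hθlt1 : θ < 1 := by rw [hθdef]; linarith
  have hθpos : 0 < θ := by rw [hθdef]; linarith
  have h1θ : 0 < 1 - θ := by linarith
  obtain ⟨Q, hQdef⟩ : ∃ x, x = 2*S + F + 1 := ⟨_, rfl⟩
  have hQ1 : 1 ≤ Q := by rw [hQdef]; linarith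
  have hQ0 : 0 < Q := by linarith
  obtain ⟨B, hBdef⟩ : ∃ x, x = 2*Q/(1-θ) := ⟨_, rfl⟩
  have hB0 : 0 < B := by rw [hBdef]; positivity
  have hBQ : (1-θ)*B = 2*Q := by
    rw [hBdef, mul_comm, div_mul_cancel₀ _ (ne_of_gt h1θ)]
  have hQB : Q ≤ B := by nlinarith
  obtain ⟨E, hEdef⟩ : ∃ x, x = 8*si*Q/(1-θ)^2 := ⟨_, rfl⟩
  have hE0 : 0 < E := by rw [hEdef]; positivity
  obtain ⟨n0, hn0def⟩ : ∃ m, m = max 2 (Nat.ceil E) := ⟨_, rfl⟩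
  have hn02 : 2 ≤ n0 := hn0def ▸ le_max_left _ _
  have hn0r : (0:ℝ) < (n0:ℝ) := by exact_mod_cast (by omega : 0 < n0)
  have hval : E ≤ (n0:ℝ) := by
    have h1 : ((Nat.ceil E : ℕ) : ℝ) ≤ ((n0:ℕ) : ℝ) :=
      Nat.cast_le.mpr (hn0def ▸ le_max_right 2 (Nat.ceil E))
    exact le_trans (Nat.le_ceil _) h1
  have hε : 2*si/(n0:ℝ) ≤ (1-θ)^2/(4*Q) := by
    have h2 : 2*si/(n0:ℝ) ≤ 2*si/E :=
      div_le_div_of_nonneg_left (by positivity) hE0 hval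
    have h3 : 2*si/E = (1-θ)^2/(4*Q) := by
      rw [hEdef]; field_simp; ring
    linarith
  have hεpos : 0 < 2*si/(n0:ℝ) := by positivity
  -- choose t
  obtain ⟨u, hudef⟩ : ∃ x, x = (1 - θ0)/2/(θ0+1) := ⟨_, rfl⟩
  have hupos : 0 < u := by
    rw [hudef]
    exact div_pos (div_pos (by linarith) (by norm_num)) (by linarith)
  obtain ⟨v, hvdef⟩ : ∃ x, x = 1/(2*((n0:ℝ)+1)) := ⟨_, rfl⟩
  have hvpos : 0 < v := by rw [hvdef]; positivity
  obtain ⟨t, htdef⟩ : ∃ x, x = min T (1 + min u v) := ⟨_, rfl⟩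
  have hminpos : 0 < min u v := lt_min hupos hvpos
  have ht1 : 1 < t := by rw [htdef]; exact lt_min hT (by linarith)
  have ht0 : (0:ℝ) ≤ t := by linarith
  have htT : t ≤ T := htdef ▸ min_le_left _ _
  have htu : t ≤ 1 + u := by
    have h1 : min u v ≤ u := min_le_left _ _
    have h2 : t ≤ 1 + min u v := htdef ▸ min_le_right _ _
    linarith
  have htv : t ≤ 1 + v := by
    have h1 : min u v ≤ v := min_le_right _ _
    have h2 : t ≤ 1 + min u v := htdef ▸ min_le_right _ _
    linarith
  have hθt : si * b 1 * t ≤ θ := by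
    have hne : θ0 + 1 ≠ 0 := by linarith
    have hkey2 : (θ0+1) * u = (1-θ0)/2 := by rw [hudef]; field_simp
    have h4 : θ0 * t ≤ θ0 * (1 + u) := mul_le_mul_of_nonneg_left htu hθ00
    have h5 : θ0 * u ≤ (θ0+1) * u := mul_le_mul_of_nonneg_right (by linarith) hupos.le
    have h6 : θ0 * (1 + u) = θ0 + θ0 * u := by ring
    rw [← hθ0def, hθdef]
    linarith
  have htn0 : t^n0 ≤ 2 := by
    have h2 : t^n0 ≤ (1 + v)^n0 := pow_le_pow_left₀ ht0 htv n0
    have h3 : (n0:ℝ) * v ≤ 1/2 := by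
      rw [hvdef, mul_one_div, div_le_div_iff₀ (by positivity) (by norm_num : (0:ℝ) < 2)]
      linarith
    have h4 := pow_one_add_le v hvpos.le n0 h3
    have h5 : 1 + 2*(n0:ℝ)*v ≤ 2 := by linarith
    linarith
  -- the scaled sequence
  obtain ⟨c, hcdef⟩ : ∃ c : ℕ → ℝ, c = fun n => b n * t^n := ⟨_, rfl⟩
  have hc0 : ∀ n, 0 ≤ c n := fun n => hcdef ▸ mul_nonneg (hb n) (by positivity)
  have hcb : ∀ n, c n = b n * t^n := fun n => by rw [hcdef]
  have hcrec : ∀ n, 1 ≤ n → c n = q n * t^n + ∑ j ∈ Finset.Ico 1 n,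
      ((si * j - σ) * (Nat.factorial j : ℝ) * (Nat.factorial (n-j) : ℝ) / (Nat.factorial n : ℝ))
        * c j * c (n-j) := by
    intro n hn
    have hr := hrec n hn
    rw [hcb n, hr, add_mul, Finset.sum_mul]
    congr 1
    apply Finset.sum_congr rfl
    intro j hj
    rw [Finset.mem_Ico] at hj
    have hpow : t^n = t^j * t^(n-j) := by rw [← pow_add]; congr 1; omega
    rw [hcb j, hcb (n-j), hpow]
    ring
  -- per-n inequality
  have hkey : ∀ n, n0 + 1 ≤ n → c n ≤ q n * T^n + θ * c (n-1)
      + (2*si/(n0:ℝ)) * ∑ j ∈ Finset.Ico 1 n, c j * c (n-j) := by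
    intro n hn
    rw [hcrec n (by omega)]
    have h1n : 1 ≤ n - 1 := by omega
    have hsplit := Finset.sum_Ico_succ_top (a := 1) (b := n-1)
      (f := fun j => ((si * j - σ) * (Nat.factorial j : ℝ) * (Nat.factorial (n-j) : ℝ)
        / (Nat.factorial n : ℝ)) * c j * c (n-j)) h1n
    rw [show n - 1 + 1 = n by omega] at hsplit
    rw [hsplit]
    have hnn1 : n - (n-1) = 1 := by omega
    have hbound1 : ((si * ((n-1:ℕ):ℝ) - σ) * (Nat.factorial (n-1) : ℝ)
        * (Nat.factorial (n-(n-1)) : ℝ) / (Nat.factorial n : ℝ)) * c (n-1) * c (n-(n-1))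
        ≤ θ * c (n-1) := by
      rw [hnn1]
      have hw := w_le_si si σ hsi hσ1 hσ2 n (n-1) h1n (by omega)
      have hc1 : c 1 = b 1 * t := by rw [hcb 1, pow_one]
      calc ((si * ((n-1:ℕ):ℝ) - σ) * (Nat.factorial (n-1) : ℝ)
            * (Nat.factorial 1 : ℝ) / (Nat.factorial n : ℝ)) * c (n-1) * c 1
          ≤ si * c (n-1) * c 1 := by
            apply mul_le_mul_of_nonneg_right _ (hc0 1)
            apply mul_le_mul_of_nonneg_right _ (hc0 (n-1))
            have := w_le_si si σ hsi hσ1 hσ2 n (n-1) h1n (by omega)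
            rw [hnn1] at this
            exact this
        _ = (si * b 1 * t) * c (n-1) := by rw [hc1]; ring
        _ ≤ θ * c (n-1) := mul_le_mul_of_nonneg_right hθt (hc0 (n-1))
    have hbound2 : ∑ j ∈ Finset.Ico 1 (n-1),
        ((si * j - σ) * (Nat.factorial j : ℝ) * (Nat.factorial (n-j) : ℝ)
          / (Nat.factorial n : ℝ)) * c j * c (n-j)
        ≤ (2*si/(n0:ℝ)) * ∑ j ∈ Finset.Ico 1 n, c j * c (n-j) := by
      calc ∑ j ∈ Finset.Ico 1 (n-1),
            ((si * j - σ) * (Nat.factorial j : ℝ) * (Nat.factorial (n-j) : ℝ)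
              / (Nat.factorial n : ℝ)) * c j * c (n-j)
          ≤ ∑ j ∈ Finset.Ico 1 (n-1), (2*si/(n0:ℝ)) * (c j * c (n-j)) := by
            apply Finset.sum_le_sum
            intro j hj
            rw [Finset.mem_Ico] at hj
            have hw1 := w_le_mid si σ hsi hσ1 hσ2 n j hj.1 (by omega)
            have hw2 : 2*si/(n:ℝ) ≤ 2*si/(n0:ℝ) := by
              apply div_le_div_of_nonneg_left (by positivity) hn0r
              exact_mod_cast (by omega : n0 ≤ n)
            have hcc : 0 ≤ c j * c (n-j) := mul_nonneg (hc0 j) (hc0 (n-j))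
            calc ((si * j - σ) * (Nat.factorial j : ℝ) * (Nat.factorial (n-j) : ℝ)
                  / (Nat.factorial n : ℝ)) * c j * c (n-j)
                = ((si * j - σ) * (Nat.factorial j : ℝ) * (Nat.factorial (n-j) : ℝ)
                  / (Nat.factorial n : ℝ)) * (c j * c (n-j)) := by ring
              _ ≤ (2*si/(n0:ℝ)) * (c j * c (n-j)) :=
                  mul_le_mul_of_nonneg_right (le_trans hw1 hw2) hcc
        _ = (2*si/(n0:ℝ)) * ∑ j ∈ Finset.Ico 1 (n-1), c j * c (n-j) := by
            rw [Finset.mul_sum]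
        _ ≤ (2*si/(n0:ℝ)) * ∑ j ∈ Finset.Ico 1 n, c j * c (n-j) := by
            apply mul_le_mul_of_nonneg_left _ (le_of_lt hεpos)
            apply Finset.sum_le_sum_of_subset_of_nonneg
            · exact Finset.Ico_subset_Ico le_rfl (by omega)
            · intro j _ _
              exact mul_nonneg (hc0 j) (hc0 (n-j))
    have hqt : q n * t^n ≤ q n * T^n :=
      mul_le_mul_of_nonneg_left (pow_le_pow_left₀ ht0 htT n) (hq n)
    linarith
  -- partial sums bounded
  have hPnn : ∀ N : ℕ, (0:ℝ) ≤ ∑ k ∈ Finset.range (N+1), c k :=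
    fun N => Finset.sum_nonneg (fun k _ => hc0 k)
  have hP2S : ∀ N, N ≤ n0 → ∑ k ∈ Finset.range (N+1), c k ≤ 2*S := by
    intro N hN
    have h1 : ∑ k ∈ Finset.range (N+1), c k ≤ ∑ k ∈ Finset.range (N+1), 2 * b k := by
      apply Finset.sum_le_sum
      intro k hk
      rw [Finset.mem_range] at hk
      have hkn0 : k ≤ n0 := by omega
      have htk : t^k ≤ 2 := le_trans (pow_le_pow_right₀ (le_of_lt ht1) hkn0) htn0
      rw [hcb k]
      calc b k * t^k ≤ b k * 2 := mul_le_mul_of_nonneg_left htk (hb k)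
        _ = 2 * b k := by ring
    have h2 : ∑ k ∈ Finset.range (N+1), 2 * b k = 2 * ∑ k ∈ Finset.range (N+1), b k := by
      rw [Finset.mul_sum]
    have h3 : ∑ k ∈ Finset.range (N+1), b k ≤ S :=
      hSdef ▸ Summable.sum_le_tsum _ (fun i _ => hb i) hbs
    linarith
  have hPB : ∀ N, ∑ k ∈ Finset.range (N+1), c k ≤ B := by
    intro N
    induction N with
    | zero =>
      have h0 : ∑ k ∈ Finset.range 1, c k = 0 := by
        rw [Finset.sum_range_one, hcb 0, hb0, zero_mul]
      linarith
    | succ N ih =>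
      rcases le_or_gt (N+1) n0 with hle | hgt
      · linarith [hP2S (N+1) hle]
      · have hsplit : ∑ k ∈ Finset.range (N+2), c k = (∑ k ∈ Finset.range (n0+1), c k)
            + ∑ k ∈ Finset.Ico (n0+1) (N+2), c k :=
          (Finset.sum_range_add_sum_Ico c (by omega)).symm
        have hfirst : ∑ k ∈ Finset.range (n0+1), c k ≤ 2*S := hP2S n0 le_rfl
        have hsum1 : ∑ n ∈ Finset.Ico (n0+1) (N+2), q n * T^n ≤ F :=
          hFdef ▸ Summable.sum_le_tsum _ (fun i _ => mul_nonneg (hq i) (by positivity)) hqT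
        have hsum2 : ∑ n ∈ Finset.Ico (n0+1) (N+2), c (n-1) ≤ ∑ k ∈ Finset.range (N+1), c k := by
          have he : ∑ n ∈ Finset.Ico (n0+1) (N+2), c (n-1)
              = ∑ n ∈ Finset.Ico n0 (N+1), c n := by
            rw [Finset.sum_Ico_eq_sum_range, Finset.sum_Ico_eq_sum_range]
            rw [show N+2-(n0+1) = N+1-n0 by omega]
            apply Finset.sum_congr rfl
            intro k _
            congr 1
            omega
          rw [he]
          apply Finset.sum_le_sum_of_subset_of_nonneg
          · intro x hx
            rw [Finset.mem_Ico] at hx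
            rw [Finset.mem_range]
            omega
          · intro i _ _
            exact hc0 i
        have hsum3 : ∑ n ∈ Finset.Ico (n0+1) (N+2), ∑ j ∈ Finset.Ico 1 n, c j * c (n-j)
            ≤ (∑ k ∈ Finset.range (N+1), c k) ^ 2 := by
          calc ∑ n ∈ Finset.Ico (n0+1) (N+2), ∑ j ∈ Finset.Ico 1 n, c j * c (n-j)
              ≤ ∑ n ∈ Finset.Ico 1 (N+2), ∑ j ∈ Finset.Ico 1 n, c j * c (n-j) := by
                apply Finset.sum_le_sum_of_subset_of_nonneg
                · exact Finset.Ico_subset_Ico (by omega) le_rfl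
                · intro i _ _
                  exact Finset.sum_nonneg (fun j _ => mul_nonneg (hc0 j) (hc0 (i-j)))
            _ ≤ (∑ k ∈ Finset.range (N+1), c k)^2 := sum_sq_bound c hc0 (N+1)
        have hsecond : ∑ k ∈ Finset.Ico (n0+1) (N+2), c k
            ≤ F + θ * (∑ k ∈ Finset.range (N+1), c k)
              + (2*si/(n0:ℝ)) * (∑ k ∈ Finset.range (N+1), c k) ^ 2 := by
          have hstep : ∑ k ∈ Finset.Ico (n0+1) (N+2), c k
              ≤ ∑ n ∈ Finset.Ico (n0+1) (N+2), (q n * T^n + θ * c (n-1)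
                + (2*si/(n0:ℝ)) * ∑ j ∈ Finset.Ico 1 n, c j * c (n-j)) := by
            apply Finset.sum_le_sum
            intro n hn
            rw [Finset.mem_Ico] at hn
            exact hkey n hn.1
          have hexp : ∑ n ∈ Finset.Ico (n0+1) (N+2), (q n * T^n + θ * c (n-1)
                + (2*si/(n0:ℝ)) * ∑ j ∈ Finset.Ico 1 n, c j * c (n-j))
              = (∑ n ∈ Finset.Ico (n0+1) (N+2), q n * T^n)
                + θ * (∑ n ∈ Finset.Ico (n0+1) (N+2), c (n-1))
                + (2*si/(n0:ℝ)) * ∑ n ∈ Finset.Ico (n0+1) (N+2),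
                    ∑ j ∈ Finset.Ico 1 n, c j * c (n-j) := by
            rw [Finset.sum_add_distrib, Finset.sum_add_distrib, Finset.mul_sum, Finset.mul_sum]
          have t1 : θ * (∑ n ∈ Finset.Ico (n0+1) (N+2), c (n-1))
              ≤ θ * (∑ k ∈ Finset.range (N+1), c k) :=
            mul_le_mul_of_nonneg_left hsum2 (le_of_lt hθpos)
          have t2 : (2*si/(n0:ℝ)) * (∑ n ∈ Finset.Ico (n0+1) (N+2),
              ∑ j ∈ Finset.Ico 1 n, c j * c (n-j))
              ≤ (2*si/(n0:ℝ)) * (∑ k ∈ Finset.range (N+1), c k) ^ 2 :=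
            mul_le_mul_of_nonneg_left hsum3 (le_of_lt hεpos)
          linarith
        -- combine
        have hεP : (2*si/(n0:ℝ)) * (∑ k ∈ Finset.range (N+1), c k) ^ 2
            ≤ (1-θ)^2/(4*Q) * B^2 := by
          apply mul_le_mul hε _ (by positivity) (by positivity)
          exact pow_le_pow_left₀ (hPnn N) ih 2
        have hQeq : (1-θ)^2/(4*Q) * B^2 = Q := by
          rw [hBdef]; field_simp; ring
        have hθB : θ * (∑ k ∈ Finset.range (N+1), c k) ≤ θ * B :=
          mul_le_mul_of_nonneg_left ih (le_of_lt hθpos)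
        have hrel : (1-θ)*B + θ*B = B := by ring
        rw [hsplit]
        linarith
  -- conclude
  refine ⟨t, ht1, ?_⟩
  have hsum : Summable c := by
    apply summable_of_sum_range_le hc0
    intro n
    cases n with
    | zero => simpa using hB0.le
    | succ m => exact hPB m
  rw [hcdef] at hsum
  exact hsum

private lemma pos_summable (si σ : ℝ) (hsi : 1 ≤ si) (hσ1 : σ ≤ 1) (hσ2 : -1 ≤ σ)
    (q a : ℕ → ℝ) (hq : ∀ n, 0 ≤ q n) (ha : ∀ n, 0 ≤ a n) (ha0 : a 0 = 0)
    (hrec : ∀ n, 1 ≤ n → a n = q n + ∑ j ∈ Finset.Ico 1 n,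
      ((si * j - σ) * (Nat.factorial j : ℝ) * (Nat.factorial (n-j) : ℝ) / (Nat.factorial n : ℝ))
        * a j * a (n-j))
    (x0 : ℝ) (hx0 : 0 < x0) (hq0 : Summable fun n => q n * x0^n) :
    ∃ x : ℝ, 0 < x ∧ Summable fun n => a n * x ^ n := by
  have hsi0 : 0 < si := by linarith
  obtain ⟨F0, hF0def⟩ : ∃ x, x = ∑' n, q n * x0^n := ⟨_, rfl⟩
  have hF00 : 0 ≤ F0 := hF0def ▸ tsum_nonneg (fun n => mul_nonneg (hq n) (by positivity))
  obtain ⟨lam, hlamdef⟩ : ∃ x, x = min (1/2) (1/(8*si*(F0+1))) := ⟨_, rfl⟩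
  have hlampos : 0 < lam := by
    rw [hlamdef]
    apply lt_min (by norm_num)
    positivity
  have hlam1 : lam ≤ 1/2 := hlamdef ▸ min_le_left _ _
  have hlam2 : lam ≤ 1/(8*si*(F0+1)) := hlamdef ▸ min_le_right _ _
  obtain ⟨x, hxdef⟩ : ∃ y, y = lam * x0 := ⟨_, rfl⟩
  have hx : 0 < x := by rw [hxdef]; positivity
  obtain ⟨d, hddef⟩ : ∃ d : ℕ → ℝ, d = fun n => a n * x^n := ⟨_, rfl⟩
  have hdb : ∀ n, d n = a n * x^n := fun n => by rw [hddef]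
  have hd0 : ∀ n, 0 ≤ d n := fun n => by rw [hdb n]; exact mul_nonneg (ha n) (by positivity)
  have hdrec : ∀ n, 1 ≤ n → d n = q n * x^n + ∑ j ∈ Finset.Ico 1 n,
      ((si * j - σ) * (Nat.factorial j : ℝ) * (Nat.factorial (n-j) : ℝ) / (Nat.factorial n : ℝ))
        * d j * d (n-j) := by
    intro n hn
    have hr := hrec n hn
    rw [hdb n, hr, add_mul, Finset.sum_mul]
    congr 1
    apply Finset.sum_congr rfl
    intro j hj
    rw [Finset.mem_Ico] at hj
    have hpow : x^n = x^j * x^(n-j) := by rw [← pow_add]; congr 1; omega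
    rw [hdb j, hdb (n-j), hpow]
    ring
  -- tail bound on q-sums
  have hQbound : ∀ N : ℕ, ∑ n ∈ Finset.Ico 1 (N+1), q n * x^n ≤ 1/(8*si) := by
    intro N
    have h1 : ∑ n ∈ Finset.Ico 1 (N+1), q n * x^n
        ≤ ∑ n ∈ Finset.Ico 1 (N+1), lam * (q n * x0^n) := by
      apply Finset.sum_le_sum
      intro n hn
      rw [Finset.mem_Ico] at hn
      have hlampow : lam^n ≤ lam := by
        calc lam^n ≤ lam^1 := pow_le_pow_of_le_one hlampos.le (by linarith) hn.1
          _ = lam := pow_one lam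
      have : x^n = lam^n * x0^n := by rw [hxdef, mul_pow]
      rw [this]
      calc q n * (lam^n * x0^n) = lam^n * (q n * x0^n) := by ring
        _ ≤ lam * (q n * x0^n) := by
            apply mul_le_mul_of_nonneg_right hlampow
            exact mul_nonneg (hq n) (by positivity)
    have h2 : ∑ n ∈ Finset.Ico 1 (N+1), lam * (q n * x0^n)
        = lam * ∑ n ∈ Finset.Ico 1 (N+1), q n * x0^n := by rw [Finset.mul_sum]
    have h3 : ∑ n ∈ Finset.Ico 1 (N+1), q n * x0^n ≤ F0 :=
      hF0def ▸ Summable.sum_le_tsum _ (fun i _ => mul_nonneg (hq i) (by positivity)) hq0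
    have h4 : lam * ∑ n ∈ Finset.Ico 1 (N+1), q n * x0^n ≤ lam * F0 :=
      mul_le_mul_of_nonneg_left h3 hlampos.le
    have h5 : lam * F0 ≤ (1/(8*si*(F0+1))) * F0 := mul_le_mul_of_nonneg_right hlam2 hF00
    have h6 : (1/(8*si*(F0+1))) * F0 ≤ 1/(8*si) := by
      rw [div_mul_eq_mul_div, div_le_div_iff₀ (by positivity) (by positivity)]
      nlinarith
    linarith
  -- partial sums bounded
  have hPB : ∀ N : ℕ, ∑ k ∈ Finset.range (N+1), d k ≤ 1/(4*si) := by
    intro N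
    induction N with
    | zero =>
      have h0 : ∑ k ∈ Finset.range 1, d k = 0 := by
        rw [Finset.sum_range_one, hdb 0, ha0, zero_mul]
      rw [h0]
      positivity
    | succ N ih =>
      have hsplit : ∑ k ∈ Finset.range (N+2), d k
          = (∑ k ∈ Finset.range 1, d k) + ∑ k ∈ Finset.Ico 1 (N+2), d k :=
        (Finset.sum_range_add_sum_Ico d (by omega)).symm
      have h0 : ∑ k ∈ Finset.range 1, d k = 0 := by
        rw [Finset.sum_range_one, hdb 0, ha0, zero_mul]
      have hstep : ∑ n ∈ Finset.Ico 1 (N+2), d n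
          ≤ ∑ n ∈ Finset.Ico 1 (N+2), (q n * x^n
            + si * ∑ j ∈ Finset.Ico 1 n, d j * d (n-j)) := by
        apply Finset.sum_le_sum
        intro n hn
        rw [Finset.mem_Ico] at hn
        rw [hdrec n hn.1]
        have hb2 : ∑ j ∈ Finset.Ico 1 n,
            ((si * j - σ) * (Nat.factorial j : ℝ) * (Nat.factorial (n-j) : ℝ)
              / (Nat.factorial n : ℝ)) * d j * d (n-j)
            ≤ si * ∑ j ∈ Finset.Ico 1 n, d j * d (n-j) := by
          rw [Finset.mul_sum]
          apply Finset.sum_le_sum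
          intro j hj
          rw [Finset.mem_Ico] at hj
          have hw := w_le_si si σ hsi hσ1 hσ2 n j hj.1 hj.2
          have hcc : 0 ≤ d j * d (n-j) := mul_nonneg (hd0 j) (hd0 (n-j))
          calc ((si * j - σ) * (Nat.factorial j : ℝ) * (Nat.factorial (n-j) : ℝ)
                / (Nat.factorial n : ℝ)) * d j * d (n-j)
              = ((si * j - σ) * (Nat.factorial j : ℝ) * (Nat.factorial (n-j) : ℝ)
                / (Nat.factorial n : ℝ)) * (d j * d (n-j)) := by ring
            _ ≤ si * (d j * d (n-j)) := mul_le_mul_of_nonneg_right hw hcc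
        linarith
      have hexp : ∑ n ∈ Finset.Ico 1 (N+2), (q n * x^n
            + si * ∑ j ∈ Finset.Ico 1 n, d j * d (n-j))
          = (∑ n ∈ Finset.Ico 1 (N+2), q n * x^n)
            + si * ∑ n ∈ Finset.Ico 1 (N+2), ∑ j ∈ Finset.Ico 1 n, d j * d (n-j) := by
        rw [Finset.sum_add_distrib, Finset.mul_sum]
      have hsq : ∑ n ∈ Finset.Ico 1 (N+2), ∑ j ∈ Finset.Ico 1 n, d j * d (n-j)
          ≤ (∑ k ∈ Finset.range (N+1), d k)^2 := sum_sq_bound d hd0 (N+1)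
      have hsq2 : si * (∑ n ∈ Finset.Ico 1 (N+2), ∑ j ∈ Finset.Ico 1 n, d j * d (n-j))
          ≤ si * (1/(4*si))^2 := by
        apply mul_le_mul_of_nonneg_left _ hsi0.le
        calc ∑ n ∈ Finset.Ico 1 (N+2), ∑ j ∈ Finset.Ico 1 n, d j * d (n-j)
            ≤ (∑ k ∈ Finset.range (N+1), d k)^2 := hsq
          _ ≤ (1/(4*si))^2 := by
              apply pow_le_pow_left₀ (Finset.sum_nonneg (fun k _ => hd0 k)) ih
      have heq : si * (1/(4*si))^2 = 1/(16*si) := by field_simp; ring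
      have hfin : 1/(8*si) + 1/(16*si) ≤ 1/(4*si) := by
        rw [div_add_div _ _ (by positivity : (8:ℝ)*si ≠ 0) (by positivity : (16:ℝ)*si ≠ 0),
          div_le_div_iff₀ (by positivity) (by positivity)]
        nlinarith
      have hq1 := hQbound (N+1)
      rw [hsplit, h0]
      linarith
  refine ⟨x, hx, ?_⟩
  have hsum : Summable d := by
    apply summable_of_sum_range_le (c := 1/(4*si)) hd0
    intro n
    cases n with
    | zero => simp; positivity
    | succ m => exact hPB m
  rw [hddef] at hsum
  exact hsum

/-- If `ρ_a < ρ` and `ρ_a < 1/(|s|·a_1)`, then `A` is unbounded on `(0, ρ_a)`: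
for every real `M` there is `x` with `0 < x < ρ_a` and `A(x) > M`. -/


theorem A_unbounded
    (s : ℤ) (hs : s ≠ 0)
    (p : ℕ → ℝ) (hp : ∀ k, 1 ≤ k → 0 ≤ p k)
    (ρ : ℝ≥0∞)
    (hρ : ρ = seriesRadius fun k => if k = 0 then 0 else p k / (Nat.factorial k))
    (hρ0 : 0 < ρ)
    (hf : ∃ k, 1 ≤ k ∧ p k ≠ 0)
    (γ : ℕ → ℝ)
    (hγ : ∀ n, 1 ≤ n → γ n = p n +
      ∑ j ∈ Finset.Ico 1 n, ((|s| : ℝ) * j - (s.sign : ℝ)) * γ j * γ (n - j))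
    (a : ℕ → ℝ) (ha : ∀ n, a n = if n = 0 then 0 else γ n / (Nat.factorial n))
    (ρa : ℝ≥0∞) (hρa : ρa = seriesRadius a)
    (h1 : ρa < ρ)
    (h2 : ρa < (ENNReal.ofReal ((|s| : ℝ) * a 1))⁻¹) :
    ∀ M : ℝ, ∃ x : ℝ, 0 < x ∧ ENNReal.ofReal x < ρa ∧ M < ∑' n, a n * x ^ n := by
  intro M
  by_contra hcon
  push_neg at hcon
  -- basic sign facts
  set si : ℝ := |(s:ℝ)| with hsidef
  set σ : ℝ := ((s.sign : ℤ) : ℝ) with hσdef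
  have hsi : 1 ≤ si := by
    rw [hsidef, ← Int.cast_abs]
    exact_mod_cast Int.one_le_abs hs
  have hsign : s.sign = 1 ∨ s.sign = -1 := by
    rcases lt_trichotomy s 0 with h|h|h
    · right; rwa [Int.sign_eq_neg_one_iff_neg]
    · exact absurd h hs
    · left; rwa [Int.sign_eq_one_iff_pos]
  have hσ1 : σ ≤ 1 := by
    rw [hσdef]; rcases hsign with h|h <;> rw [h] <;> norm_num
  have hσ2 : -1 ≤ σ := by
    rw [hσdef]; rcases hsign with h|h <;> rw [h] <;> norm_num
  -- the coefficient function of f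
  set fc : ℕ → ℝ := fun k => if k = 0 then 0 else p k / (Nat.factorial k) with hfcdef
  have hfc0 : ∀ k, 0 ≤ fc k := by
    intro k
    rw [hfcdef]
    by_cases hk : k = 0
    · simp [hk]
    · simp only [hk, if_false]
      have : 0 ≤ p k := hp k (by omega)
      positivity
  -- nonnegativity of γ and a
  have hγ0 : ∀ n, 1 ≤ n → 0 ≤ γ n := by
    intro n
    induction n using Nat.strong_induction_on with
    | _ n ih =>
      intro hn
      rw [hγ n hn]
      have h1' : 0 ≤ p n := hp n hn
      have h2' : 0 ≤ ∑ j ∈ Finset.Ico 1 n, ((|s| : ℝ) * j - (s.sign : ℝ)) * γ j * γ (n - j) := by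
        apply Finset.sum_nonneg
        intro j hj
        rw [Finset.mem_Ico] at hj
        have hj1 : (1:ℝ) ≤ (j:ℝ) := by exact_mod_cast hj.1
        have hw : 0 ≤ (|s| : ℝ) * j - (s.sign : ℝ) := by
          have h3 : (s.sign : ℝ) ≤ 1 := by rw [← hσdef]; exact hσ1
          have h4 : (1:ℝ) ≤ |(s:ℝ)| := by rw [← hsidef]; exact hsi
          nlinarith
        exact mul_nonneg (mul_nonneg hw (ih j hj.2 hj.1)) (ih (n-j) (by omega) (by omega))
      linarith
  have ha0 : ∀ n, 0 ≤ a n := by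
    intro n
    rw [ha n]
    by_cases hn : n = 0
    · simp [hn]
    · simp only [hn, if_false]
      have h1' : 0 ≤ γ n := hγ0 n (by omega)
      positivity
  have ha00 : a 0 = 0 := by rw [ha 0]; simp
  -- the recursion for a
  have hγa : ∀ j, 1 ≤ j → γ j = a j * (Nat.factorial j : ℝ) := by
    intro j hj
    have hj0 : j ≠ 0 := by omega
    rw [ha j]
    simp only [hj0, if_false]
    have hne : (Nat.factorial j : ℝ) ≠ 0 := by positivity
    rw [div_mul_cancel₀ _ hne]
  have hrecA : ∀ n, 1 ≤ n → a n = fc n + ∑ j ∈ Finset.Ico 1 n,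
      ((si * j - σ) * (Nat.factorial j : ℝ) * (Nat.factorial (n-j) : ℝ) / (Nat.factorial n : ℝ))
        * a j * a (n-j) := by
    intro n hn
    have hn0 : n ≠ 0 := by omega
    rw [ha n]
    simp only [hn0, if_false]
    rw [hγ n hn, hfcdef]
    simp only [hn0, if_false]
    rw [add_div, Finset.sum_div]
    congr 1
    apply Finset.sum_congr rfl
    intro j hj
    rw [Finset.mem_Ico] at hj
    rw [hγa j hj.1, hγa (n-j) (by omega)]
    rw [hsidef, hσdef]
    ring
  -- scaled recursion
  have hrecS : ∀ (y : ℝ), ∀ n, 1 ≤ n → a n * y^n = fc n * y^n + ∑ j ∈ Finset.Ico 1 n,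
      ((si * j - σ) * (Nat.factorial j : ℝ) * (Nat.factorial (n-j) : ℝ) / (Nat.factorial n : ℝ))
        * (a j * y^j) * (a (n-j) * y^(n-j)) := by
    intro y n hn
    rw [hrecA n hn, add_mul, Finset.sum_mul]
    congr 1
    apply Finset.sum_congr rfl
    intro j hj
    rw [Finset.mem_Ico] at hj
    have hpow : y^n = y^j * y^(n-j) := by rw [← pow_add]; congr 1; omega
    rw [hpow]
    ring
  -- positivity of ρa
  have hρapos : 0 < ρa := by
    obtain ⟨r0, hr0sum, hr0pos⟩ := exists_of_lt_seriesRadius fc 0 (by rw [← hρ]; exact hρ0)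
    have hx0 : (0:ℝ) < (r0:ℝ) := by exact_mod_cast hr0pos
    have hq0 : Summable fun n => fc n * (r0:ℝ)^n := by
      have : (fun n => fc n * (r0:ℝ)^n) = (fun n => |fc n| * (r0:ℝ)^n) := by
        funext n
        rw [abs_of_nonneg (hfc0 n)]
      rw [this]
      exact hr0sum
    obtain ⟨x, hxpos, hxsum⟩ := pos_summable si σ hsi hσ1 hσ2 fc a hfc0 ha0 ha00 hrecA
      (r0:ℝ) hx0 hq0
    have hsum' : Summable fun n => |a n| * ((x.toNNReal : ℝ))^n := by
      have hc : ((x.toNNReal : ℝ)) = x := Real.coe_toNNReal x hxpos.le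
      rw [hc]
      have : (fun n => |a n| * x^n) = (fun n => a n * x^n) := by
        funext n; rw [abs_of_nonneg (ha0 n)]
      rw [this]
      exact hxsum
    have hle := le_seriesRadius a x.toNNReal hsum'
    rw [← hρa] at hle
    calc (0:ℝ≥0∞) < ENNReal.ofReal x := ENNReal.ofReal_pos.mpr hxpos
      _ ≤ ρa := hle
  -- setup r
  have hρatop : ρa ≠ ⊤ := h1.ne_top
  set r : ℝ := ρa.toReal with hrdef
  have hr0 : 0 < r := ENNReal.toReal_pos (ne_of_gt hρapos) hρatop
  have hρar : ENNReal.ofReal r = ρa := by rw [hrdef]; exact ENNReal.ofReal_toReal hρatop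
  -- bound on tsum below r
  have hM : ∀ x : ℝ, 0 < x → x < r → (∑' n, a n * x^n) ≤ M := by
    intro x hx hxr
    have h3 : ENNReal.ofReal x < ρa := by
      rw [← hρar]
      exact (ENNReal.ofReal_lt_ofReal_iff hr0).mpr hxr
    exact hcon x hx h3
  -- partial sums at r bounded by M
  have hpr : ∀ N : ℕ, ∑ k ∈ Finset.range N, a k * r^k ≤ M := by
    intro N
    have hcont : Continuous fun x : ℝ => ∑ k ∈ Finset.range N, a k * x^k := by
      apply continuous_finset_sum
      intro i _
      exact continuous_const.mul (continuous_pow i)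
    have htend : Filter.Tendsto (fun x : ℝ => ∑ k ∈ Finset.range N, a k * x^k)
        (nhdsWithin r (Set.Iio r)) (nhds (∑ k ∈ Finset.range N, a k * r^k)) :=
      (hcont.tendsto r).mono_left nhdsWithin_le_nhds
    apply le_of_tendsto htend
    filter_upwards [Ioo_mem_nhdsLT_of_mem (Set.mem_Ioc.mpr ⟨hr0, le_refl r⟩)] with x hx
    have hxpos : 0 < x := hx.1
    have hxr : x < r := hx.2
    have hsx : Summable fun n => a n * x^n := by
      apply summable_of_lt_seriesRadius a x hxpos.le
      rw [← hρa, ← hρar]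
      exact (ENNReal.ofReal_lt_ofReal_iff hr0).mpr hxr
    calc ∑ k ∈ Finset.range N, a k * x^k ≤ ∑' n, a n * x^n :=
          Summable.sum_le_tsum _ (fun i _ => mul_nonneg (ha0 i) (by positivity)) hsx
      _ ≤ M := hM x hxpos hxr
  -- b is summable
  have hbnn : ∀ n, 0 ≤ a n * r^n := fun n => mul_nonneg (ha0 n) (by positivity)
  have hbs : Summable fun n => a n * r^n :=
    summable_of_sum_range_le hbnn hpr
  -- T from ρa < ρ
  obtain ⟨r', hr'sum, hr'lt⟩ := exists_of_lt_seriesRadius fc ρa (by rw [← hρ]; exact h1)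
  have hrr' : r < (r':ℝ) := by
    have := (ENNReal.ofReal_lt_coe_iff hr0.le).mp (by rw [hρar]; exact hr'lt)
    exact this
  have hr'0 : (0:ℝ) < (r':ℝ) := lt_trans hr0 hrr'
  set T : ℝ := (r':ℝ)/r with hTdef
  have hT : 1 < T := by rw [hTdef]; exact (one_lt_div hr0).mpr hrr'
  have hqT : Summable fun n => (fc n * r^n) * T^n := by
    have heq : (fun n => (fc n * r^n) * T^n) = (fun n => |fc n| * (r':ℝ)^n) := by
      funext n
      rw [abs_of_nonneg (hfc0 n), hTdef, div_pow]
      rw [mul_assoc, mul_comm ((r:ℝ)^n), div_mul_cancel₀ _ (by positivity : (r:ℝ)^n ≠ 0)]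
    rw [heq]
    exact hr'sum
  -- hlin
  have hlinA : si * a 1 * r < 1 := by
    rcases eq_or_lt_of_le (mul_nonneg (by linarith : (0:ℝ) ≤ si) (ha0 1)) with h|h
    · rw [← h, zero_mul]; norm_num
    · have h2' : ENNReal.ofReal r < (ENNReal.ofReal (si * a 1))⁻¹ := by
        rw [hρar]
        rw [hsidef]
        exact h2
      have hne0 : ENNReal.ofReal (si * a 1) ≠ 0 := (ENNReal.ofReal_pos.mpr h).ne'
      have hnetop : ENNReal.ofReal (si * a 1) ≠ ⊤ := ENNReal.ofReal_ne_top
      have hlt1 : ENNReal.ofReal r * ENNReal.ofReal (si * a 1) < 1 := by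
        calc ENNReal.ofReal r * ENNReal.ofReal (si * a 1)
            < (ENNReal.ofReal (si * a 1))⁻¹ * ENNReal.ofReal (si * a 1) :=
              ENNReal.mul_lt_mul_left hne0 hnetop h2'
          _ = 1 := ENNReal.inv_mul_cancel hne0 hnetop
      rw [← ENNReal.ofReal_mul hr0.le] at hlt1
      have := ENNReal.ofReal_lt_one.mp hlt1
      nlinarith
  -- apply key lemma
  have hb0' : a 0 * r^0 = 0 := by rw [ha00, zero_mul]
  obtain ⟨t, ht1, htsum⟩ := key_summable si σ hsi hσ1 hσ2
    (fun n => fc n * r^n) (fun n => a n * r^n)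
    (fun n => mul_nonneg (hfc0 n) (by positivity)) hbnn hb0'
    (fun n hn => hrecS r n hn) hbs T hT hqT
    (by show si * (a 1 * r^1) < 1; rw [pow_one, ← mul_assoc]; exact hlinA)
  -- contradiction
  have hrt : r < r*t := by nlinarith
  have hrtpos : 0 < r*t := by nlinarith
  have hsum' : Summable fun n => |a n| * (((r*t).toNNReal : ℝ))^n := by
    have hc : (((r*t).toNNReal : ℝ)) = r*t := Real.coe_toNNReal _ hrtpos.le
    rw [hc]
    have heq2 : (fun n => |a n| * (r*t)^n) = (fun n => (a n * r^n) * t^n) := by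
      funext n
      rw [abs_of_nonneg (ha0 n), mul_pow]
      ring
    rw [heq2]
    exact htsum
  have hle := le_seriesRadius a (r*t).toNNReal hsum'
  rw [← hρa] at hle
  have hlt : ρa < ((r*t).toNNReal : ℝ≥0∞) := by
    rw [← hρar]
    have : ((r*t).toNNReal : ℝ≥0∞) = ENNReal.ofReal (r*t) := rfl
    rw [this]
    exact (ENNReal.ofReal_lt_ofReal_iff hrtpos).mpr hrt
  exact absurd hle (not_le_of_gt hlt)
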